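/- A term order ≺ on the terms of S = K[x_0,…,x_n] agrees with the lexicographic order on terms of equal degree if and only if every saturated Borel ideal I ⊆ S that is a gen-segment ideal with respect to ≺ is a segment ideal with respect to ≺ (equivalently, the notions segment ideal, hilb-segment ideal, reg-segment ideal and gen-segment ideal with respect to ≺ coincide for all nonzero saturated Borel ideals). -/
import Mathlib


open Polynomial

/-- Exponent vectors of monomials (terms) of `S = K[x_0, …, x_n]`. -/
abbrev Expo (n : ℕ) := Fin (n + 1) → ℕ

/-- The degree of a term. -/
def deg {n : ℕ} (α : Expo n) : ℕ := ∑ i, α i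

/-- The exponent vector of the variable `x_i`. -/
def sing {n : ℕ} (i : Fin (n + 1)) : Expo n := Pi.single i 1

/-- `MoveDown α β` : the term `α` is obtained from `β` by an elementary move `e_j^-`,
i.e. `α = x_{j-1}·β/x_j` for some `j ≥ 1` with `β_j > 0`. -/
def MoveDown {n : ℕ} (α β : Expo n) : Prop :=
  ∃ j k : Fin (n + 1), (k : ℕ) + 1 = (j : ℕ) ∧ α + sing j = β + sing k

/-- The Borel (partial) order `α <_B β` : transitive closure of elementary moves `e_j^-`. -/
def BorelLt {n : ℕ} (α β : Expo n) : Prop := Relation.TransGen MoveDown α β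

/-- A Borel set: a set of terms closed upwards under the Borel order. -/
def IsBorelSet {n : ℕ} (B : Set (Expo n)) : Prop :=
  ∀ α β : Expo n, α ∈ B → MoveDown α β → β ∈ B

/-- A monomial ideal, identified with its set of terms: closed under multiplication
by arbitrary terms. -/
def IsMonIdeal {n : ℕ} (M : Set (Expo n)) : Prop :=
  ∀ α ∈ M, ∀ γ : Expo n, α + γ ∈ M

/-- A Borel ideal: a monomial ideal which is a Borel set in every degree. -/
def IsBorelIdeal {n : ℕ} (M : Set (Expo n)) : Prop :=
  IsMonIdeal M ∧ IsBorelSet M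

/-- `𝒩(M)_t` : the set of degree-`t` terms not lying in `M`. -/
def coIdeal {n : ℕ} (M : Set (Expo n)) (t : ℕ) : Set (Expo n) :=
  {α | deg α = t ∧ α ∉ M}

/-- `p` is the Hilbert polynomial of `S/M` : `|𝒩(M)_t| = p(t)` for all `t` large. -/
def HasHilbPoly {n : ℕ} (M : Set (Expo n)) (p : Polynomial ℚ) : Prop :=
  ∃ N : ℕ, ∀ t : ℕ, N ≤ t → ((coIdeal M t).ncard : ℚ) = p.eval (t : ℚ)

/-- Saturation for monomial ideals: a term `α` with `x_i^{k_i}·α ∈ M` for suitable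
powers of every variable already lies in `M`. -/
def IsSaturatedIdeal {n : ℕ} (M : Set (Expo n)) : Prop :=
  ∀ α : Expo n, (∀ i : Fin (n + 1), ∃ k : ℕ, α + k • sing i ∈ M) → α ∈ M

/-- A term order on the terms of `S`: a multiplicative (strict) total order with `1`
as least element and `x_0 ≺ x_1 ≺ … ≺ x_n`. -/
structure TermOrder (n : ℕ) where
  lt : Expo n → Expo n → Prop
  irrefl : ∀ a : Expo n, ¬ lt a a
  trans : ∀ a b c : Expo n, lt a b → lt b c → lt a c
  total : ∀ a b : Expo n, a ≠ b → lt a b ∨ lt b a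
  add_right : ∀ a b c : Expo n, lt a b → lt (a + c) (b + c)
  zero_lt : ∀ a : Expo n, a ≠ 0 → lt 0 a
  var_lt : ∀ i j : Fin (n + 1), i < j → lt (sing i) (sing j)

/-- `M ∩ 𝕋_t` is a segment w.r.t. the order `lt`. -/
def IsSegmentAt {n : ℕ} (lt : Expo n → Expo n → Prop) (M : Set (Expo n)) (t : ℕ) : Prop :=
  ∀ τ σ : Expo n, τ ∈ M → deg τ = t → deg σ = t → lt τ σ → σ ∈ M

/-- `M` is a segment ideal w.r.t. the order `lt`. -/
def IsSegmentIdeal {n : ℕ} (lt : Expo n → Expo n → Prop) (M : Set (Expo n)) : Prop :=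
  ∀ t : ℕ, IsSegmentAt lt M t

/-- `α` is a minimal monomial generator of the monomial ideal `M`. -/
def IsMinGen {n : ℕ} (M : Set (Expo n)) (α : Expo n) : Prop :=
  α ∈ M ∧ ∀ β γ : Expo n, β + γ = α → β ∈ M → γ = 0

/-- The ideal generated by the elements of `M` of degree `≤ s - 1`. -/
def genBelow {n : ℕ} (M : Set (Expo n)) (s : ℕ) : Set (Expo n) :=
  {x | ∃ α γ : Expo n, α ∈ M ∧ deg α < s ∧ x = α + γ}

/-- `M` is a gen-segment ideal w.r.t. `lt`: for every `s` the minimal generators of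
degree `s` are the greatest among the degree-`s` terms not in `⟨M_{≤ s-1}⟩`. -/
def IsGenSegment {n : ℕ} (lt : Expo n → Expo n → Prop) (M : Set (Expo n)) : Prop :=
  ∀ α : Expo n, IsMinGen M α → ∀ σ : Expo n, deg σ = deg α →
    σ ∉ genBelow M (deg α) → ¬ IsMinGen M σ → lt σ α

/-- `δ` is the maximal degree of a minimal monomial generator of `M`. -/
def IsMaxGenDeg {n : ℕ} (M : Set (Expo n)) (δ : ℕ) : Prop :=
  (∃ α : Expo n, IsMinGen M α ∧ deg α = δ) ∧ ∀ α : Expo n, IsMinGen M α → deg α ≤ δ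

/-- `p` is an admissible polynomial with Gotzmann decomposition of length `r`
(so `r` is its Gotzmann number):
`p(z) = ∑_{i=1}^{r} binom(z + a_i - (i-1), a_i)` with `a_1 ≥ … ≥ a_r ≥ 0`. -/
def IsGotzmannDecomp (p : Polynomial ℚ) (r : ℕ) : Prop :=
  ∃ a : Fin r → ℕ, Antitone a ∧
    ∀ t : ℕ, r ≤ t →
      p.eval (t : ℚ) = ∑ i : Fin r, ((t + a i - (i : ℕ)).choose (a i) : ℚ)

/-- An admissible polynomial: one admitting a Gotzmann decomposition. -/
def IsAdmissible (p : Polynomial ℚ) : Prop := ∃ r : ℕ, IsGotzmannDecomp p r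

/-- Setting `x_0 = x_1 = 1` in a term. -/
def trunc01 {n : ℕ} (α : Expo n) : Expo n := fun i => if (i : ℕ) ≤ 1 then 0 else α i

/-- The `x_1`-saturation of a monomial ideal: the ideal generated by the minimal
generators with `x_0 = x_1 = 1`. -/
def xOneSat {n : ℕ} (M : Set (Expo n)) : Set (Expo n) :=
  {x | ∃ α γ : Expo n, IsMinGen M α ∧ x = trunc01 α + γ}

/-- The lexicographic comparison (intended for terms of equal degree):
`α ≺_lex β` iff `α_k < β_k` at the largest index `k` where they differ. -/
def LexLt {n : ℕ} (α β : Expo n) : Prop :=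
  ∃ k : Fin (n + 1), α k < β k ∧ ∀ j : Fin (n + 1), k < j → α j = β j

/-- The reverse lexicographic comparison (intended for terms of equal degree):
`α ≺_revlex β` iff `α_h > β_h` at the smallest index `h` where they differ. -/
def RevLexLt {n : ℕ} (α β : Expo n) : Prop :=
  ∃ h : Fin (n + 1), β h < α h ∧ ∀ j : Fin (n + 1), j < h → α j = β j

/-- A graded term order. -/
def IsGraded {n : ℕ} (ord : TermOrder n) : Prop :=
  ∀ α β : Expo n, deg α < deg β → ord.lt α β

/-- A reverse term order: a graded term order such that, on terms of equal degree,
a strictly larger exponent of `x_0` makes a term strictly smaller. -/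
def IsReverseOrder {n : ℕ} (ord : TermOrder n) : Prop :=
  IsGraded ord ∧ ∀ α β : Expo n, deg α = deg β → β 0 < α 0 → ord.lt α β

section Basic
variable {n : ℕ}

lemma sing_apply (i j : Fin (n+1)) : sing i j = if j = i then 1 else 0 :=
  Pi.single_apply i 1 j

lemma deg_add (a b : Expo n) : deg (a + b) = deg a + deg b := by
  simp [deg, Finset.sum_add_distrib]

lemma deg_sing (i : Fin (n+1)) : deg (sing i) = 1 := by
  simp [deg, sing_apply]

lemma smul_sing_apply (c : ℕ) (i j : Fin (n+1)) :
    (c • sing i) j = if j = i then c else 0 := by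
  rw [Pi.smul_apply, sing_apply, smul_eq_mul]
  split <;> simp

lemma deg_smul_sing (c : ℕ) (i : Fin (n+1)) : deg (c • sing i) = c := by
  simp [deg, ← Finset.mul_sum, sing_apply]

lemma deg_eq_zero {a : Expo n} (h : deg a = 0) : a = 0 := by
  funext j
  have := Finset.sum_eq_zero_iff.mp h j (Finset.mem_univ j)
  simpa using this

lemma exists_pos_of_deg {a : Expo n} (h : 1 ≤ deg a) : ∃ i, 1 ≤ a i := by
  by_contra hc
  push_neg at hc
  have : a = 0 := by funext j; exact Nat.lt_one_iff.mp (hc j)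
  rw [this] at h
  simp [deg] at h

lemma le_deg (a : Expo n) (i : Fin (n+1)) : a i ≤ deg a :=
  Finset.single_le_sum (fun j _ => Nat.zero_le _) (Finset.mem_univ i)

lemma sub_sing (a : Expo n) (i : Fin (n+1)) (h : 1 ≤ a i) :
    a = (fun j => if j = i then a i - 1 else a j) + sing i := by
  funext j
  simp only [Pi.add_apply, sing_apply]
  split
  · rename_i hj; subst hj; omega
  · omega

lemma deg_one {a : Expo n} (h : deg a = 1) : ∃ i, a = sing i := by
  obtain ⟨i, hi⟩ := exists_pos_of_deg (le_of_eq h.symm)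
  refine ⟨i, funext fun j => ?_⟩
  rw [sing_apply]
  by_cases hj : j = i
  · subst hj
    -- a j = 1
    have h2 : a j ≤ 1 := h ▸ le_deg a j
    simp; omega
  · simp only [if_neg hj]
    by_contra hne
    have h1 : 1 ≤ a j := by omega
    -- two distinct coordinates ≥ 1, contradiction with deg = 1
    have : a i + a j ≤ deg a := by
      have : ({i, j} : Finset (Fin (n+1))).sum a ≤ deg a :=
        Finset.sum_le_sum_of_subset (Finset.subset_univ _)
      rwa [Finset.sum_pair (fun hij => hj hij.symm)] at this
    omega

lemma lex_irrefl (a : Expo n) : ¬ LexLt a a := by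
  rintro ⟨k, hk, -⟩; exact lt_irrefl _ hk

lemma lex_total {a b : Expo n} (h : a ≠ b) : LexLt a b ∨ LexLt b a := by
  have hne : (Finset.univ.filter (fun j => a j ≠ b j)).Nonempty := by
    by_contra hc
    rw [Finset.not_nonempty_iff_eq_empty, Finset.filter_eq_empty_iff] at hc
    exact h (funext fun j => not_not.mp (hc (Finset.mem_univ j)))
  set S := Finset.univ.filter (fun j => a j ≠ b j)
  set k := S.max' hne with hk
  have hkS : k ∈ S := S.max'_mem hne
  have hkne : a k ≠ b k := (Finset.mem_filter.mp hkS).2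
  have hup : ∀ j, k < j → a j = b j := by
    intro j hj
    by_contra hc
    exact absurd (S.le_max' j (Finset.mem_filter.mpr ⟨Finset.mem_univ j, hc⟩)) (not_le.mpr hj)
  rcases Nat.lt_or_ge (a k) (b k) with h1 | h1
  · exact Or.inl ⟨k, h1, hup⟩
  · exact Or.inr ⟨k, lt_of_le_of_ne h1 (Ne.symm hkne), fun j hj => (hup j hj).symm⟩

lemma ord_asymm (ord : TermOrder n) {a b : Expo n} (h1 : ord.lt a b) (h2 : ord.lt b a) : False :=
  ord.irrefl a (ord.trans a b a h1 h2)

end Basic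
section Order1
variable {n : ℕ}

lemma split_coord (v : Expo n) (k : Fin (n+1)) :
    v = (fun j => if j = k then 0 else v j) + (v k) • sing k := by
  funext j
  simp only [Pi.add_apply, smul_sing_apply]
  by_cases h : j = k
  · subst h; simp
  · simp [h]

lemma min_x0 (ord : TermOrder n) :
    ∀ (D : ℕ) (r : Expo n), deg r = D → r = D • sing 0 ∨ ord.lt (D • sing 0) r := by
  intro D
  induction D with
  | zero =>
    intro r h
    left
    rw [deg_eq_zero h]; simp
  | succ D ih =>
    intro r h
    by_cases h0 : ∀ j : Fin (n+1), j ≠ 0 → r j = 0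
    · left
      have hr : r = (r 0) • sing 0 := by
        funext j
        rw [smul_sing_apply]
        by_cases hj : j = 0
        · subst hj; simp
        · simp [hj, h0 j hj]
      rw [hr, deg_smul_sing] at h
      rw [hr, h]
    · right
      push_neg at h0
      obtain ⟨i, hi0, hri⟩ := h0
      have hri1 : 1 ≤ r i := Nat.one_le_iff_ne_zero.mpr hri
      have hr : r = (fun j => if j = i then r i - 1 else r j) + sing i := sub_sing r i hri1
      set r' : Expo n := fun j => if j = i then r i - 1 else r j with hr'
      have hdr' : deg r' = D := by
        have := h
        rw [hr, deg_add, deg_sing] at this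
        omega
      have hvar : ord.lt (sing 0 + r') (sing i + r') :=
        ord.add_right _ _ _ (ord.var_lt 0 i (Fin.pos_of_ne_zero hi0))
      have hsucc : (D + 1) • (sing 0 : Expo n) = D • sing 0 + sing 0 := succ_nsmul _ _
      rcases ih r' hdr' with heq | hlt
      · have e1 : sing 0 + r' = (D + 1) • (sing 0 : Expo n) := by
          rw [heq, hsucc, add_comm]
        have e2 : sing i + r' = r := by rw [hr, add_comm]
        rw [e1, e2] at hvar
        exact hvar
      · have l1 : ord.lt (D • (sing 0 : Expo n) + sing 0) (r' + sing 0) :=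
          ord.add_right _ _ _ hlt
        have l2 : ord.lt (r' + sing 0) (r' + sing i) := by
          rw [add_comm r' (sing 0), add_comm r' (sing i)]
          exact hvar
        have := ord.trans _ _ _ l1 l2
        rw [← hsucc, ← hr] at this
        exact this

lemma max_xk (ord : TermOrder n) (k : Fin (n+1)) :
    ∀ (s : ℕ) (a : Expo n), (∀ j, k < j → a j = 0) → deg a = s → a ≠ s • sing k →
      ord.lt a (s • sing k) := by
  intro s
  induction s with
  | zero =>
    intro a hsupp hdeg hne
    exact absurd (by rw [deg_eq_zero hdeg]; simp) hne
  | succ s ih =>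
    intro a hsupp hdeg hne
    obtain ⟨i, hi⟩ := exists_pos_of_deg (a := a) (by omega)
    have hik : i ≤ k := by
      by_contra hc
      push_neg at hc
      have := hsupp i hc
      omega
    have ha : a = (fun j => if j = i then a i - 1 else a j) + sing i := sub_sing a i hi
    set a' : Expo n := fun j => if j = i then a i - 1 else a j with ha'
    have hsupp' : ∀ j, k < j → a' j = 0 := by
      intro j hj
      have hji : j ≠ i := by
        intro hji
        exact absurd (lt_of_le_of_lt hik (hji ▸ hj)) (lt_irrefl _)
      simp only [ha', if_neg hji]
      exact hsupp j hj
    have hda' : deg a' = s := by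
      have := hdeg
      rw [ha, deg_add, deg_sing] at this
      omega
    have hsucc : (s + 1) • (sing k : Expo n) = s • sing k + sing k := succ_nsmul _ _
    by_cases heq : a' = s • sing k
    · rcases lt_or_eq_of_le hik with hik' | hik'
      · have hvar : ord.lt (sing i + a') (sing k + a') :=
          ord.add_right _ _ _ (ord.var_lt i k hik')
        have e1 : sing i + a' = a := by rw [ha, add_comm]
        have e2 : sing k + a' = (s+1) • (sing k : Expo n) := by
          rw [heq, hsucc, add_comm]
        rw [e1, e2] at hvar
        exact hvar
      · exfalso
        apply hne
        rw [ha, heq, hik', hsucc, add_comm]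
    · have hlt := ih a' hsupp' hda' heq
      have l1 : ord.lt (a' + sing i) (s • sing k + sing i) := ord.add_right _ _ _ hlt
      rcases lt_or_eq_of_le hik with hik' | hik'
      · have l2 : ord.lt (s • sing k + sing i) (s • sing k + sing k) := by
          rw [add_comm _ (sing i), add_comm _ (sing k)]
          exact ord.add_right _ _ _ (ord.var_lt i k hik')
        have := ord.trans _ _ _ l1 l2
        rw [← ha, ← hsucc] at this
        exact this
      · rw [← ha, hik', ← hsucc] at l1
        exact l1

end Order1
section Order2
variable {n : ℕ}

/-- The generator condition: `x_k x_0^{E-1}` is `ord`-greater than every degree-`E`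
term in the variables `x_0, …, x_{k-1}`. -/
def GenCond (ord : TermOrder n) : Prop :=
  ∀ (k : Fin (n+1)) (a : Expo n), 0 < (k : ℕ) → (∀ j, k ≤ j → a j = 0) → 1 ≤ deg a →
    ord.lt a (sing k + (deg a - 1) • sing 0)

lemma gencond_imp_lex (ord : TermOrder n) (hg : GenCond ord) :
    ∀ α β : Expo n, deg α = deg β → LexLt α β → ord.lt α β := by
  intro α β hd hlex
  obtain ⟨k, hk, hup⟩ := hlex
  have hk0 : 0 < (k : ℕ) := by
    by_contra hc
    push_neg at hc
    have hk0' : (k : ℕ) = 0 := by omega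
    have : deg α < deg β := by
      apply Finset.sum_lt_sum (fun j _ => ?_) ⟨k, Finset.mem_univ k, hk⟩
      rcases eq_or_ne j k with hj | hj
      · subst hj; exact le_of_lt hk
      · have : k < j := by
          have : (j : ℕ) ≠ 0 := fun hj0 => hj (Fin.ext (by omega))
          exact Fin.lt_def.mpr (by omega)
        exact le_of_eq (hup j this)
    omega
  -- split off the common part above k
  set a : Expo n := fun j => if k < j then 0 else α j with hadef
  set b : Expo n := fun j => if k < j then 0 else β j with hbdef
  set C : Expo n := fun j => if k < j then α j else 0 with hCdef
  have hαC : α = a + C := by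
    funext j
    simp only [Pi.add_apply, hadef, hCdef]
    by_cases h : k < j <;> simp [h]
  have hβC : β = b + C := by
    funext j
    simp only [Pi.add_apply, hbdef, hCdef]
    by_cases h : k < j
    · simp [h, hup j h]
    · simp [h]
  have hdab : deg a = deg b := by
    have h1 : deg α = deg a + deg C := by rw [hαC, deg_add]
    have h2 : deg β = deg b + deg C := by rw [hβC, deg_add]
    omega
  have hak : a k = α k := by simp [hadef]
  have hbk : b k = β k := by simp [hbdef]
  -- it suffices to compare a and b
  suffices hab : ord.lt a b by
    rw [hαC, hβC]
    exact ord.add_right _ _ _ hab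
  -- decompose a = a'' + A • sing k
  set A := a k with hA
  set a'' : Expo n := fun j => if j = k then 0 else a j with ha''
  have haspl : a = a'' + A • sing k := split_coord a k
  have hsuppa'' : ∀ j, k ≤ j → a'' j = 0 := by
    intro j hj
    rcases eq_or_ne j k with h | h
    · simp [ha'', h]
    · have hkj : k < j := lt_of_le_of_ne hj (Ne.symm h)
      simp [ha'', h, hadef, hkj]
  set E := deg a'' with hE
  have hdaE : deg a = E + A := by rw [haspl, deg_add, deg_smul_sing]
  set B := b k with hB
  have hBle : B ≤ deg b := le_deg b k
  have hABlt : A < B := by rw [hak, hbk]; exact hk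
  have hE1 : 1 ≤ E := by omega
  -- step 1 : a ≺ m
  have h1 : ord.lt a'' (sing k + (E - 1) • sing 0) := hg k a'' hk0 hsuppa'' (by rw [← hE]; exact hE1)
  have h1' : ord.lt (a'' + A • sing k) (sing k + (E - 1) • sing 0 + A • sing k) :=
    ord.add_right _ _ _ h1
  rw [← haspl] at h1'
  -- step 2 : m ⪯ b
  set r : Expo n := fun j => if j = k then B - (A + 1) else b j with hr
  have hbr : b = r + (A + 1) • sing k := by
    funext j
    simp only [Pi.add_apply, hr, smul_sing_apply]
    rcases eq_or_ne j k with h | h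
    · subst h; simp only [if_pos rfl]
      simp only [ite_true]
      omega
    · simp [h]
  have hdr : deg r = E - 1 := by
    have : deg b = deg r + (A + 1) := by rw [hbr, deg_add, deg_smul_sing]
    omega
  have hmb : sing k + (E - 1) • sing 0 + A • sing k = (E - 1) • (sing 0 : Expo n) + (A + 1) • sing k := by
    rw [succ_nsmul]
    abel
  rcases min_x0 ord (E - 1) r hdr with heq | hlt
  · rw [hmb, ← heq, ← hbr] at h1'
    exact h1'
  · have l2 : ord.lt ((E - 1) • (sing 0 : Expo n) + (A + 1) • sing k) (r + (A + 1) • sing k) :=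
      ord.add_right _ _ _ hlt
    rw [← hmb, ← hbr] at l2
    exact ord.trans _ _ _ h1' l2

end Order2
section Fwd
variable {n : ℕ}

lemma sum_contra {x y : Expo n} (k : Fin (n+1)) (hd : deg x = deg y)
    (hup : ∀ j, k < j → x j = y j) (hlow : ∀ j, j < k → x j = 0) (hk : x k < y k) : False := by
  have : deg x < deg y := by
    apply Finset.sum_lt_sum (fun j _ => ?_) ⟨k, Finset.mem_univ k, hk⟩
    rcases lt_trichotomy j k with h | h | h
    · rw [hlow j h]; exact Nat.zero_le _
    · subst h; exact le_of_lt hk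
    · exact le_of_eq (hup j h)
  omega

lemma lexA (σ αp : Expo n) (i : Fin (n+1)) (hdeg : deg σ = deg (αp + sing i))
    (hlex : LexLt (αp + sing i) σ) :
    ∃ (h : Fin (n+1)) (β : Expo n), σ = β + sing h ∧ (β = αp ∨ LexLt αp β) := by
  have hσpos : 1 ≤ deg σ := by rw [hdeg, deg_add, deg_sing]; omega
  have hne : (Finset.univ.filter (fun j => 1 ≤ σ j)).Nonempty := by
    obtain ⟨i0, h0⟩ := exists_pos_of_deg hσpos
    exact ⟨i0, by simpa using h0⟩
  set h := (Finset.univ.filter (fun j => 1 ≤ σ j)).min' hne with hhdef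
  have hhmem : 1 ≤ σ h := (Finset.mem_filter.mp (Finset.min'_mem _ hne)).2
  have hmin : ∀ j, j < h → σ j = 0 := by
    intro j hj
    by_contra hc
    have h1 : 1 ≤ σ j := Nat.one_le_iff_ne_zero.mpr hc
    have := Finset.min'_le (Finset.univ.filter (fun j => 1 ≤ σ j)) j (by simpa using h1)
    rw [← hhdef] at this
    exact absurd this (not_le.mpr hj)
  have hσβ : σ = (fun j => if j = h then σ h - 1 else σ j) + sing h := sub_sing σ h hhmem
  set β : Expo n := fun j => if j = h then σ h - 1 else σ j with hβdef
  refine ⟨h, β, hσβ, ?_⟩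
  by_cases heq : β = αp
  · exact Or.inl heq
  rcases lex_total heq with hlt | hlt
  swap
  · exact Or.inr hlt
  exfalso
  obtain ⟨k, hkβ, hkup⟩ := hlt
  obtain ⟨K, hKτ, hKup⟩ := hlex
  have hσval : ∀ j, σ j = β j + (if j = h then 1 else 0) := by
    intro j
    conv_lhs => rw [hσβ]
    rw [Pi.add_apply, sing_apply]
  have hτval : ∀ j, (αp + sing i) j = αp j + (if j = i then 1 else 0) := by
    intro j
    rw [Pi.add_apply, sing_apply]
  have hβσ : ∀ j, j ≠ h → β j = σ j := by
    intro j hj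
    simp [hβdef, hj]
  have hdβ : deg β = deg αp := by
    have h1 : deg σ = deg β + 1 := by rw [hσβ, deg_add, deg_sing]
    have h2 : deg σ = deg αp + 1 := by rw [hdeg, deg_add, deg_sing]
    omega
  rcases lt_trichotomy k K with hkK | hkK | hkK
  · -- k < K : establish K = h, then contradiction via degree sums
    have hKh : K = h := by
      have e1 := hσval K
      have e2 := hτval K
      have e3 : β K = αp K := hkup K hkK
      by_contra hc
      rw [if_neg hc] at e1
      have hKi : (if K = i then 1 else 0) ≤ 1 := by split <;> omega
      omega
    refine sum_contra k hdβ hkup (fun j hj => ?_) hkβ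
    have hjh : j < h := by rw [← hKh]; exact lt_trans hj hkK
    rw [hβσ j (Fin.ne_of_lt hjh)]
    exact hmin j hjh
  · -- k = K : pointwise contradiction
    subst hkK
    have e1 := hσval k
    have e2 := hτval k
    have i1 : (if k = h then 1 else 0) ≤ 1 := by split <;> omega
    have i2 : (0:ℕ) ≤ (if k = i then 1 else 0) := Nat.zero_le _
    omega
  · -- k > K : establish k = h, then contradiction via degree sums
    have hst : σ k = (αp + sing i) k := (hKup k hkK).symm
    have e1 := hσval k
    have e2 := hτval k
    have hkh : k = h := by
      by_contra hc
      rw [if_neg hc] at e1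
      have hKi : (if k = i then 1 else 0) ≤ 1 := by split <;> omega
      omega
    refine sum_contra k hdβ hkup (fun j hj => ?_) hkβ
    have hjh : j < h := by rw [← hkh]; exact hj
    rw [hβσ j (Fin.ne_of_lt hjh)]
    exact hmin j hjh

lemma forward_dir (ord : TermOrder n)
    (hol : ∀ α β : Expo n, deg α = deg β → (ord.lt α β ↔ LexLt α β))
    (I : Set (Expo n)) (hmon : IsMonIdeal I) (hgen : IsGenSegment ord.lt I) :
    IsSegmentIdeal ord.lt I := by
  intro t
  induction t with
  | zero =>
    intro τ σ hτI hτd hσd _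
    have : σ = τ := by rw [deg_eq_zero hσd, deg_eq_zero hτd]
    rwa [this]
  | succ t ih =>
    intro τ σ hτI hτd hσd hlt
    by_cases hσ : σ ∈ I
    · exact hσ
    exfalso
    have hσnb : σ ∉ genBelow I (t+1) := by
      rintro ⟨a, g, haI, -, rfl⟩
      exact hσ (hmon a haI g)
    have hσnm : ¬ IsMinGen I σ := fun hm => hσ hm.1
    by_cases hτb : τ ∈ genBelow I (t+1)
    · obtain ⟨a, g, haI, had, hτeq⟩ := hτb
      have hdg : 1 ≤ deg g := by
        have : deg τ = deg a + deg g := by rw [hτeq, deg_add]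
        omega
      obtain ⟨i, hi⟩ := exists_pos_of_deg hdg
      have hg : g = (fun j => if j = i then g i - 1 else g j) + sing i := sub_sing g i hi
      set g' : Expo n := fun j => if j = i then g i - 1 else g j with hg'
      set αp := a + g' with hαp
      have hαpI : αp ∈ I := hmon a haI g'
      have hτap : τ = αp + sing i := by rw [hτeq, hg, hαp, add_assoc]
      have hdαp : deg αp = t := by
        have h1 : deg τ = deg αp + 1 := by rw [hτap, deg_add, deg_sing]
        omega
      have hlexτσ : LexLt τ σ := (hol τ σ (by rw [hτd, hσd])).mp hlt
      rw [hτap] at hlexτσ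
      obtain ⟨h, β, hσeq, hβ⟩ := lexA σ αp i (by rw [hσd, ← hτap, hτd]) hlexτσ
      have hdβ : deg β = t := by
        have : deg σ = deg β + 1 := by rw [hσeq, deg_add, deg_sing]
        omega
      have hβI : β ∈ I := by
        rcases hβ with rfl | hβlt
        · exact hαpI
        · exact ih αp β hαpI hdαp hdβ ((hol αp β (by rw [hdαp, hdβ])).mpr hβlt)
      exact hσ (hσeq ▸ hmon β hβI (sing h))
    · have hτm : IsMinGen I τ := by
        refine ⟨hτI, fun b c hbc hbI => ?_⟩
        by_contra hc
        have hdc : 1 ≤ deg c := by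
          by_contra hdc0
          exact hc (deg_eq_zero (by omega))
        apply hτb
        refine ⟨b, c, hbI, ?_, hbc.symm⟩
        have : deg τ = deg b + deg c := by rw [← hbc, deg_add]
        omega
      have := hgen τ hτm σ (by rw [hσd, hτd]) (hτd ▸ hσnb) hσnm
      exact ord_asymm ord hlt this

end Fwd
section Bwd
variable {n : ℕ}

/-- The counterexample ideal `(x_{k+1}, …, x_n, x_k^2)`. -/
def CexI (k : Fin (n+1)) : Set (Expo n) :=
  {α | (∃ j, k < j ∧ 1 ≤ α j) ∨ 2 ≤ α k}

lemma cexI_mon (k : Fin (n+1)) : IsMonIdeal (CexI k) := by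
  rintro α hα γ
  rcases hα with ⟨j, hj, h1⟩ | h2
  · exact Or.inl ⟨j, hj, by rw [Pi.add_apply]; omega⟩
  · exact Or.inr (by rw [Pi.add_apply]; omega)

lemma cexI_borel (k : Fin (n+1)) : IsBorelSet (CexI k) := by
  rintro α β hα ⟨j', k', hk', heq⟩
  have hval : ∀ m, α m + (if m = j' then 1 else 0) = β m + (if m = k' then 1 else 0) := by
    intro m
    have := congrFun heq m
    rw [Pi.add_apply, Pi.add_apply, sing_apply, sing_apply] at this
    exact this
  have hj'k' : j' ≠ k' := by
    intro e
    rw [e] at hk'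
    omega
  have hj'val : β j' = α j' + 1 := by
    have := hval j'
    rw [if_pos rfl, if_neg hj'k'] at this
    omega
  rcases hα with ⟨j, hj, h1⟩ | h2
  · by_cases hjk' : j = k'
    · refine Or.inl ⟨j', ?_, by omega⟩
      have h1' : (k : ℕ) < (j : ℕ) := hj
      have h2' : (j : ℕ) = (k' : ℕ) := by rw [hjk']
      exact Fin.lt_def.mpr (by omega)
    · refine Or.inl ⟨j, hj, ?_⟩
      have := hval j
      rw [if_neg hjk'] at this
      have hind : (if j = j' then 1 else 0) ≤ 1 := by split <;> omega
      omega
  · by_cases hkk' : k = k'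
    · refine Or.inl ⟨j', ?_, by omega⟩
      have h2' : (k : ℕ) = (k' : ℕ) := by rw [hkk']
      exact Fin.lt_def.mpr (by omega)
    · refine Or.inr ?_
      have := hval k
      rw [if_neg hkk'] at this
      have hind : (if k = j' then 1 else 0) ≤ 1 := by split <;> omega
      omega

lemma cexI_sat (k : Fin (n+1)) (hk : 0 < (k : ℕ)) : IsSaturatedIdeal (CexI k) := by
  intro α h
  obtain ⟨N, hN⟩ := h 0
  have hval : ∀ j : Fin (n+1), j ≠ 0 → (α + N • sing 0 : Expo n) j = α j := by
    intro j hj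
    rw [Pi.add_apply, smul_sing_apply, if_neg hj, add_zero]
  rcases hN with ⟨j, hj, h1⟩ | h2
  · have hj0 : j ≠ 0 := by
      intro e
      subst e
      have : (k : ℕ) < 0 := hj
      omega
    rw [hval j hj0] at h1
    exact Or.inl ⟨j, hj, h1⟩
  · have hk0 : k ≠ (0 : Fin (n+1)) := by
      intro e
      rw [e] at hk
      simp at hk
    rw [hval k hk0] at h2
    exact Or.inr h2

lemma cexI_mem_sing {k j : Fin (n+1)} (hj : k < j) : sing j ∈ CexI k :=
  Or.inl ⟨j, hj, by rw [sing_apply, if_pos rfl]⟩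

lemma cexI_mem_two (k : Fin (n+1)) : (2 : ℕ) • sing k ∈ CexI k :=
  Or.inr (by rw [smul_sing_apply, if_pos rfl])

lemma cexI_min_sing (k : Fin (n+1)) {j : Fin (n+1)} (hj : k < j) :
    IsMinGen (CexI k) (sing j) := by
  refine ⟨cexI_mem_sing hj, fun b c hbc hbI => ?_⟩
  have hbm : ∀ m, b m + c m = if m = j then 1 else 0 := by
    intro m
    have := congrFun hbc m
    rw [Pi.add_apply, sing_apply] at this
    exact this
  rcases hbI with ⟨j1, hj1, h1⟩ | h2
  · have hj1j : j1 = j := by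
      by_contra hne
      have := hbm j1
      rw [if_neg hne] at this
      omega
    subst hj1j
    funext m
    have hm := hbm m
    show c m = 0
    by_cases hmj : m = j1
    · subst hmj
      rw [if_pos rfl] at hm
      omega
    · rw [if_neg hmj] at hm
      omega
  · exfalso
    have := hbm k
    have hkj : k ≠ j := Fin.ne_of_lt hj
    rw [if_neg hkj] at this
    omega

lemma cexI_min_two (k : Fin (n+1)) : IsMinGen (CexI k) ((2:ℕ) • sing k) := by
  refine ⟨cexI_mem_two k, fun b c hbc hbI => ?_⟩
  have hbm : ∀ m, b m + c m = if m = k then 2 else 0 := by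
    intro m
    have := congrFun hbc m
    rw [Pi.add_apply, smul_sing_apply] at this
    exact this
  rcases hbI with ⟨j1, hj1, h1⟩ | h2
  · exfalso
    have := hbm j1
    have : j1 ≠ k := Fin.ne_of_gt hj1
    have h3 := hbm j1
    rw [if_neg this] at h3
    omega
  · funext m
    have hm := hbm m
    show c m = 0
    by_cases hmk : m = k
    · subst hmk
      rw [if_pos rfl] at hm
      omega
    · rw [if_neg hmk] at hm
      omega

lemma cexI_mingen_char (k : Fin (n+1)) {α : Expo n} (h : IsMinGen (CexI k) α) :
    (∃ j, k < j ∧ α = sing j) ∨ α = (2:ℕ) • sing k := by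
  obtain ⟨hmem, hmin⟩ := h
  rcases hmem with ⟨j, hj, h1⟩ | h2
  · left
    refine ⟨j, hj, ?_⟩
    have hg : sing j + (fun m => if m = j then α m - 1 else α m) = α := by
      funext m
      rw [Pi.add_apply, sing_apply]
      by_cases hmj : m = j
      · subst hmj; rw [if_pos rfl, if_pos rfl]; omega
      · rw [if_neg hmj, if_neg hmj]; omega
    have := hmin (sing j) _ hg (cexI_mem_sing hj)
    rw [this, add_zero] at hg
    exact hg.symm
  · right
    have hg : (2:ℕ) • sing k + (fun m => if m = k then α m - 2 else α m) = α := by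
      funext m
      rw [Pi.add_apply, smul_sing_apply]
      by_cases hmk : m = k
      · subst hmk; rw [if_pos rfl, if_pos rfl]; omega
      · rw [if_neg hmk, if_neg hmk]; omega
    have := hmin ((2:ℕ) • sing k) _ hg (cexI_mem_two k)
    rw [this, add_zero] at hg
    exact hg.symm

lemma cexI_gen_segment (ord : TermOrder n) (k : Fin (n+1)) :
    IsGenSegment ord.lt (CexI k) := by
  intro α hα σ hdσ hσnb hσnm
  rcases cexI_mingen_char k hα with ⟨j, hj, rfl⟩ | rfl
  · rw [deg_sing] at hdσ
    obtain ⟨i, rfl⟩ := deg_one hdσ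
    have hik : i ≤ k := by
      by_contra hc
      push_neg at hc
      exact hσnm (cexI_min_sing k hc)
    exact ord.var_lt i j (lt_of_le_of_lt hik hj)
  · rw [deg_smul_sing] at hdσ
    have hsupp : ∀ j, k < j → σ j = 0 := by
      intro j hj
      by_contra hc
      apply hσnb
      refine ⟨sing j, (fun m => if m = j then σ m - 1 else σ m), cexI_mem_sing hj, ?_, ?_⟩
      · rw [deg_sing, deg_smul_sing]; omega
      · funext m
        rw [Pi.add_apply, sing_apply]
        by_cases hmj : m = j
        · subst hmj; rw [if_pos rfl, if_pos rfl]; omega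
        · rw [if_neg hmj, if_neg hmj]; omega
    have hne2 : σ ≠ (2:ℕ) • sing k := fun e => hσnm (e ▸ cexI_min_two k)
    exact max_xk ord k 2 σ hsupp hdσ hne2

lemma cexI_not_segment (ord : TermOrder n) (k : Fin (n+1)) (a : Expo n)
    (hk0 : 0 < (k : ℕ)) (hsupp : ∀ j, k ≤ j → a j = 0) (hE : 1 ≤ deg a)
    (hlt : ord.lt (sing k + (deg a - 1) • sing 0) a) :
    ¬ IsSegmentIdeal ord.lt (CexI k) := by
  intro hseg
  set E := deg a with hEdef
  set τ : Expo n := (2:ℕ) • sing k + (E - 1) • sing 0 with hτdef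
  set σ : Expo n := a + sing k with hσdef
  have hk00 : k ≠ (0 : Fin (n+1)) := by
    intro e
    rw [e] at hk0
    simp at hk0
  have hτI : τ ∈ CexI k := by
    refine Or.inr ?_
    rw [hτdef, Pi.add_apply, smul_sing_apply, smul_sing_apply, if_pos rfl, if_neg hk00]
  have hσI : σ ∉ CexI k := by
    rintro (⟨j, hj, h1⟩ | h2)
    · rw [hσdef, Pi.add_apply, sing_apply, if_neg (Fin.ne_of_gt hj)] at h1
      rw [hsupp j (le_of_lt hj)] at h1
      omega
    · rw [hσdef, Pi.add_apply, sing_apply, if_pos rfl] at h2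
      rw [hsupp k (le_refl k)] at h2
      omega
  have hdτ : deg τ = E + 1 := by
    rw [hτdef, deg_add, deg_smul_sing, deg_smul_sing]
    omega
  have hdσ : deg σ = E + 1 := by
    rw [hσdef, deg_add, deg_sing]
  have hlt2 : ord.lt τ σ := by
    have h := ord.add_right _ _ (sing k) hlt
    have e : sing k + (E - 1) • (sing 0 : Expo n) + sing k = τ := by
      rw [hτdef, two_smul]
      abel
    rw [e] at h
    exact h
  exact hσI (hseg (E + 1) τ σ hτI hdτ hdσ hlt2)

end Bwd
/-- A term order `≺` agrees with the lexicographic order on terms of equal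
degree if and only if every saturated Borel ideal which is a gen-segment ideal w.r.t.
`≺` is a segment ideal w.r.t. `≺`. -/
theorem lex_iff_genSegment_imp_segment {n : ℕ} (ord : TermOrder n) :
    (∀ α β : Expo n, deg α = deg β → (ord.lt α β ↔ LexLt α β)) ↔
    (∀ I : Set (Expo n), IsBorelIdeal I → IsSaturatedIdeal I →
      IsGenSegment ord.lt I → IsSegmentIdeal ord.lt I) := by
  constructor
  · intro hol I hBI _ hgen
    exact forward_dir ord hol I hBI.1 hgen
  · intro H
    by_contra hno
    push_neg at hno
    obtain ⟨α, β, hd, hiff⟩ := hno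
    have pair : ∃ γ δ : Expo n, deg γ = deg δ ∧ LexLt γ δ ∧ ord.lt δ γ := by
      rcases hiff with ⟨h1, h2⟩ | ⟨h1, h2⟩
      · have hne : α ≠ β := fun e => ord.irrefl α (e ▸ h1)
        rcases lex_total hne with h3 | h3
        · exact absurd h3 h2
        · exact ⟨β, α, hd.symm, h3, h1⟩
      · have hne : α ≠ β := fun e => lex_irrefl β (e ▸ h2)
        rcases ord.total α β hne with h3 | h3
        · exact absurd h3 h1
        · exact ⟨α, β, hd, h2, h3⟩
    obtain ⟨γ, δ, hdgd, hlex, hord⟩ := pair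
    have key : ∃ (k : Fin (n+1)) (a : Expo n), 0 < (k : ℕ) ∧ (∀ j, k ≤ j → a j = 0) ∧
        1 ≤ deg a ∧ ord.lt (sing k + (deg a - 1) • sing 0) a := by
      by_contra hnk
      push_neg at hnk
      have hgc : GenCond ord := by
        intro k a hk hsupp hda
        have hne : a ≠ sing k + (deg a - 1) • sing 0 := by
          intro e
          have h1 : a k = 0 := hsupp k (le_refl k)
          have h2 := congrFun e k
          have hk00 : k ≠ (0 : Fin (n+1)) := by
            intro e0
            rw [e0] at hk
            simp at hk
          rw [Pi.add_apply, sing_apply, smul_sing_apply, if_pos rfl, if_neg hk00] at h2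
          omega
        rcases ord.total _ _ hne with h | h
        · exact h
        · exact absurd h (hnk k a hk hsupp hda)
      exact ord_asymm ord (gencond_imp_lex ord hgc γ δ hdgd hlex) hord
    obtain ⟨k, a, hk0, hsupp, hda, hlt⟩ := key
    exact cexI_not_segment ord k a hk0 hsupp hda hlt
      (H (CexI k) ⟨cexI_mon k, cexI_borel k⟩ (cexI_sat k hk0) (cexI_gen_segment ord k))
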